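/- arXiv:1604.00057 — 2 statements merged into one kernel-verified Lean document; each statement's English description precedes it below -/
import Mathlib

section
/- Suppose u_n → u uniformly on [0,1], w is continuous on [0, ℓ], and s_n → s uniformly on [0,T] with δ ≤ s_n(T) ≤ ℓ for all n. If û_n(x) := u_n(x / s_n(T)) for 0 ≤ x ≤ s_n(T) and û(x) := u(x / s(T)) for 0 ≤ x ≤ s(T), then ∫₀^{s_n(T)} |û_n(x) − w(x)|² dx → ∫₀^{s(T)} |û(x) − w(x)|² dx as n → ∞. -/
open Set Filter Topology intervalIntegral

/-- Convergence of the final-time cost term along a minimizing sequence: if `u_n → u`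
uniformly on `[0,1]`, `w` is continuous on `[0,ℓ]`, `s_n → s` uniformly on `[0,T]` with
`δ ≤ s_n T ≤ ℓ`, then
`∫₀^{s_n T} |u_n (x / s_n T) − w x|² dx → ∫₀^{s T} |u (x / s T) − w x|² dx`. -/
theorem stmt5
    (T δ ℓ : ℝ) (hT : 0 < T) (hδ : 0 < δ) (hδℓ : δ ≤ ℓ)
    (u : ℕ → ℝ → ℝ) (ulim : ℝ → ℝ)
    (hu : ∀ n, ContinuousOn (u n) (Icc 0 1)) (hul : ContinuousOn ulim (Icc 0 1))
    (huconv : TendstoUniformlyOn u ulim atTop (Icc 0 1))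
    (w : ℝ → ℝ) (hw : ContinuousOn w (Icc 0 ℓ))
    (s : ℕ → ℝ → ℝ) (slim : ℝ → ℝ)
    (hsconv : TendstoUniformlyOn s slim atTop (Icc 0 T))
    (hsb : ∀ n, δ ≤ s n T ∧ s n T ≤ ℓ) :
    Tendsto (fun n => ∫ x in (0 : ℝ)..(s n T), |u n (x / s n T) - w x| ^ 2)
      atTop (𝓝 (∫ x in (0 : ℝ)..(slim T), |ulim (x / slim T) - w x| ^ 2)) := by
  set c : ℕ → ℝ := fun n => s n T with hc_def
  -- pointwise convergence of the endpoints
  have hTmem : T ∈ Icc (0:ℝ) T := ⟨hT.le, le_refl T⟩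
  have hc : Tendsto c atTop (𝓝 (slim T)) := hsconv.tendsto_at hTmem
  have hcl_lb : δ ≤ slim T := le_of_tendsto_of_tendsto' tendsto_const_nhds hc fun n => (hsb n).1
  have hcl_ub : slim T ≤ ℓ := le_of_tendsto_of_tendsto' hc tendsto_const_nhds fun n => (hsb n).2
  have hcl_pos : 0 < slim T := lt_of_lt_of_le hδ hcl_lb
  have hcn_pos : ∀ n, 0 < c n := fun n => lt_of_lt_of_le hδ (hsb n).1
  -- change of variables
  have key : ∀ (v : ℝ → ℝ) (a : ℝ), a ≠ 0 →
      (∫ x in (0:ℝ)..a, |v (x / a) - w x| ^ 2)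
        = a * ∫ y in (0:ℝ)..1, |v y - w (y * a)| ^ 2 := by
    intro v a ha
    have h := intervalIntegral.smul_integral_comp_mul_right
      (fun x => |v (x / a) - w x| ^ 2) a (a := 0) (b := 1)
    simp only [zero_mul, one_mul, mul_div_cancel_right₀ _ ha, smul_eq_mul] at h
    exact h.symm
  have hne : ∀ n, c n ≠ 0 := fun n => (hcn_pos n).ne'
  -- convergence of the rescaled integrals
  have hint : Tendsto (fun n => ∫ y in (0:ℝ)..1, |u n y - w (y * c n)| ^ 2)
      atTop (𝓝 (∫ y in (0:ℝ)..1, |ulim y - w (y * slim T)| ^ 2)) := by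
    obtain ⟨M, hM⟩ := (isCompact_Icc (a := (0:ℝ)) (b := 1)).exists_bound_of_continuousOn hul
    obtain ⟨W, hW⟩ := (isCompact_Icc (a := (0:ℝ)) (b := ℓ)).exists_bound_of_continuousOn hw
    have hmaps : ∀ n, ∀ y ∈ Icc (0:ℝ) 1, y * c n ∈ Icc (0:ℝ) ℓ := by
      intro n y hy
      exact ⟨mul_nonneg hy.1 (hcn_pos n).le,
        by calc y * c n ≤ 1 * ℓ := mul_le_mul hy.2 (hsb n).2 (hcn_pos n).le zero_le_one
             _ = ℓ := one_mul ℓ⟩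
    have hcont : ∀ n, ContinuousOn (fun y => |u n y - w (y * c n)| ^ 2) (Icc 0 1) := by
      intro n
      apply ContinuousOn.pow
      apply ContinuousOn.abs
      exact (hu n).sub (hw.comp (continuousOn_id.mul continuousOn_const) (hmaps n))
    apply intervalIntegral.tendsto_integral_filter_of_dominated_convergence
      (fun _ => (M + 1 + W) ^ 2)
    · -- measurability
      filter_upwards with n
      have : Set.uIoc (0:ℝ) 1 ⊆ Icc 0 1 := by
        rw [uIoc_of_le (zero_le_one)]; exact Ioc_subset_Icc_self
      exact ((hcont n).mono this).aestronglyMeasurable measurableSet_uIoc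
    · -- bound
      have h1 : ∀ᶠ n in atTop, ∀ y ∈ Icc (0:ℝ) 1, dist (ulim y) (u n y) < 1 :=
        (Metric.tendstoUniformlyOn_iff.mp huconv) 1 one_pos
      filter_upwards [h1] with n hn
      filter_upwards with y hy
      have hy' : y ∈ Icc (0:ℝ) 1 := by
        rw [uIoc_of_le (zero_le_one)] at hy; exact Ioc_subset_Icc_self hy
      have hub : |u n y - w (y * c n)| ≤ M + 1 + W := by
        calc |u n y - w (y * c n)| ≤ |u n y| + |w (y * c n)| := abs_sub _ _
          _ ≤ (M + 1) + W := by
              gcongr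
              · calc |u n y| ≤ |ulim y| + |u n y - ulim y| := by
                      have := abs_sub_abs_le_abs_sub (u n y) (ulim y)
                      linarith [abs_nonneg (u n y - ulim y)]
                  _ ≤ M + 1 := by
                      have h2 := hM y hy'
                      have h3 := hn y hy'
                      rw [dist_comm, Real.dist_eq] at h3
                      simp only [Real.norm_eq_abs] at h2
                      linarith
              · simpa using hW _ (hmaps n y hy')
      have hnn : (0:ℝ) ≤ M + 1 + W := le_trans (abs_nonneg _) hub
      rw [Real.norm_eq_abs, abs_pow, abs_abs]
      exact pow_le_pow_left₀ (abs_nonneg _) hub 2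
    · exact intervalIntegrable_const
    · -- pointwise limit
      filter_upwards with y hy
      have hy' : y ∈ Icc (0:ℝ) 1 := by
        rw [uIoc_of_le (zero_le_one)] at hy; exact Ioc_subset_Icc_self hy
      have hu1 : Tendsto (fun n => u n y) atTop (𝓝 (ulim y)) := huconv.tendsto_at hy'
      have harg : Tendsto (fun n => y * c n) atTop (𝓝 (y * slim T)) :=
        tendsto_const_nhds.mul hc
      have hmem : y * slim T ∈ Icc (0:ℝ) ℓ := by
        constructor
        · exact mul_nonneg hy'.1 hcl_pos.le
        · calc y * slim T ≤ 1 * ℓ := mul_le_mul hy'.2 hcl_ub hcl_pos.le zero_le_one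
            _ = ℓ := one_mul ℓ
      have hw2 : Tendsto (fun n => w (y * c n)) atTop (𝓝 (w (y * slim T))) := by
        apply (hw.continuousWithinAt hmem).tendsto.comp
        apply tendsto_nhdsWithin_of_tendsto_nhds_of_eventually_within _ harg
        filter_upwards with n
        exact hmaps n y hy'
      exact ((hu1.sub hw2).abs).pow 2
  have main : Tendsto (fun n => c n * ∫ y in (0:ℝ)..1, |u n y - w (y * c n)| ^ 2)
      atTop (𝓝 (slim T * ∫ y in (0:ℝ)..1, |ulim y - w (y * slim T)| ^ 2)) := hc.mul hint
  rw [key ulim (slim T) hcl_pos.ne']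
  exact main.congr fun n => (key (u n) (c n) (hne n)).symm
end

section
/- If v : [0,1] → ℝ is Hölder continuous with exponent 1/2 (constant L), w ∈ C[0,1], and s_n → s in ℝ with s_n, s ∈ [δ, ℓ] ⊆ (0, ∞), then t_n := ∫₀^{s_n} |v(x/s_n) − w(x)|² dx converges to ∫₀^{s} |v(x/s) − w(x)|² dx, with |t_n − t| ≤ C(L, ‖v‖_∞, ‖w‖_∞, δ, ℓ) · |s_n − s|^{1/2}. -/
open Set Filter Topology intervalIntegral


private lemma vcont_of_holder (L : ℝ) (v : ℝ → ℝ)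
    (hvH : ∀ x ∈ Icc (0 : ℝ) 1, ∀ y ∈ Icc (0 : ℝ) 1,
        |v x - v y| ≤ L * |x - y| ^ ((1 : ℝ) / 2)) (hL : 0 ≤ L) :
    ContinuousOn v (Icc (0 : ℝ) 1) := by
  intro x hx
  rw [Metric.continuousWithinAt_iff]
  intro ε hε
  refine ⟨(ε / (L + 1)) ^ 2, by positivity, fun y hy hdy => ?_⟩
  have h1 := hvH y hy x hx
  rw [← Real.sqrt_eq_rpow] at h1
  have h2 : Real.sqrt |y - x| ≤ ε / (L + 1) := by
    have : |y - x| ≤ (ε / (L + 1)) ^ 2 := by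
      rw [Real.dist_eq] at hdy; linarith
    calc Real.sqrt |y - x| ≤ Real.sqrt ((ε / (L + 1)) ^ 2) := Real.sqrt_le_sqrt this
    _ = ε / (L + 1) := Real.sqrt_sq (by positivity)
  rw [Real.dist_eq]
  have hLε : L * (ε / (L + 1)) < ε := by
    rw [mul_div_assoc'] ; rw [div_lt_iff₀ (by linarith)] ; nlinarith
  calc |v y - v x| ≤ L * Real.sqrt |y - x| := h1
  _ ≤ L * (ε / (L + 1)) := by
    exact mul_le_mul_of_nonneg_left h2 hL
  _ < ε := hLε

private lemma key_est (δ ℓ L Mv Mw : ℝ) (hδ : 0 < δ) (hδℓ : δ ≤ ℓ) (hL : 0 ≤ L)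
    (v w : ℝ → ℝ)
    (hvH : ∀ x ∈ Icc (0 : ℝ) 1, ∀ y ∈ Icc (0 : ℝ) 1,
        |v x - v y| ≤ L * |x - y| ^ ((1 : ℝ) / 2))
    (hvb : ∀ x ∈ Icc (0 : ℝ) 1, |v x| ≤ Mv)
    (hw : ContinuousOn w (Icc 0 ℓ)) (hwb : ∀ x ∈ Icc (0 : ℝ) ℓ, |w x| ≤ Mw)
    (a b : ℝ) (ha : a ∈ Icc δ ℓ) (hb : b ∈ Icc δ ℓ) (hba : b ≤ a) :
    |(∫ x in (0 : ℝ)..a, |v (x / a) - w x| ^ 2)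
        - ∫ x in (0 : ℝ)..b, |v (x / b) - w x| ^ 2|
      ≤ (2 * (Mv + Mw) * L * Real.sqrt (ℓ / δ ^ 2) * ℓ + (Mv + Mw) ^ 2 * Real.sqrt ℓ)
          * Real.sqrt (a - b) := by
  have hvc := vcont_of_holder L v hvH hL
  have hMv : 0 ≤ Mv := le_trans (abs_nonneg _) (hvb 0 ⟨le_refl _, zero_le_one⟩)
  have hMw : 0 ≤ Mw := le_trans (abs_nonneg _) (hwb 0 ⟨le_refl _, le_trans hδ.le hδℓ⟩)
  have hℓ0 : 0 < ℓ := lt_of_lt_of_le hδ hδℓ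
  have hδa : 0 < a := lt_of_lt_of_le hδ ha.1
  have hδb : 0 < b := lt_of_lt_of_le hδ hb.1
  -- continuity of integrands
  have contOn : ∀ c : ℝ, c ∈ Icc δ ℓ →
      ContinuousOn (fun x => |v (x / c) - w x| ^ 2) (Icc 0 c) := by
    intro c hc
    have hc0 : 0 < c := lt_of_lt_of_le hδ hc.1
    have maps : MapsTo (fun x : ℝ => x / c) (Icc 0 c) (Icc 0 1) := by
      intro x hx
      exact ⟨div_nonneg hx.1 hc0.le, (div_le_one hc0).2 hx.2⟩
    have h1 : ContinuousOn (fun x : ℝ => v (x / c)) (Icc 0 c) :=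
      hvc.comp (continuousOn_id.div_const c) maps
    have h2 : ContinuousOn w (Icc 0 c) := hw.mono (Icc_subset_Icc le_rfl hc.2)
    exact ((h1.sub h2).abs).pow 2
  have int_ab : ∀ (c d e : ℝ), c ∈ Icc δ ℓ → 0 ≤ d → e ≤ c → d ≤ e →
      IntervalIntegrable (fun x => |v (x / c) - w x| ^ 2) MeasureTheory.volume d e := by
    intro c d e hc hd he hde
    apply ((contOn c hc).mono ?_).intervalIntegrable
    rw [uIcc_of_le hde]
    exact Icc_subset_Icc hd he
  set fa := fun x => |v (x / a) - w x| ^ 2 with hfa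
  set fb := fun x => |v (x / b) - w x| ^ 2 with hfb
  have i1 : IntervalIntegrable fa MeasureTheory.volume 0 b :=
    int_ab a 0 b ha le_rfl hba hδb.le
  have i2 : IntervalIntegrable fa MeasureTheory.volume b a :=
    int_ab a b a ha hδb.le le_rfl hba
  have i3 : IntervalIntegrable fb MeasureTheory.volume 0 b :=
    int_ab b 0 b hb le_rfl le_rfl hδb.le
  have hsplit : (∫ x in (0:ℝ)..a, fa x) = (∫ x in (0:ℝ)..b, fa x) + ∫ x in b..a, fa x :=
    (integral_add_adjacent_intervals i1 i2).symm
  have hsub : (∫ x in (0:ℝ)..b, fa x) - (∫ x in (0:ℝ)..b, fb x)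
      = ∫ x in (0:ℝ)..b, (fa x - fb x) := (integral_sub i1 i3).symm
  have hab0 : 0 ≤ a - b := sub_nonneg.2 hba
  -- pointwise bound 1
  have K1 : ∀ x ∈ Set.uIoc (0:ℝ) b,
      ‖fa x - fb x‖ ≤ 2 * (Mv + Mw) * L * Real.sqrt (ℓ / δ ^ 2) * Real.sqrt (a - b) := by
    intro x hx
    rw [Set.uIoc_of_le hδb.le] at hx
    have hx0 : 0 < x := hx.1
    have hxb : x ≤ b := hx.2
    have hxl : x ≤ ℓ := le_trans hxb hb.2
    have hxa1 : x / a ∈ Icc (0:ℝ) 1 := ⟨div_nonneg hx0.le hδa.le,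
      (div_le_one hδa).2 (le_trans hxb hba)⟩
    have hxb1 : x / b ∈ Icc (0:ℝ) 1 := ⟨div_nonneg hx0.le hδb.le, (div_le_one hδb).2 hxb⟩
    set p := v (x / a) - w x with hp
    set q := v (x / b) - w x with hq
    have hpb : |p| ≤ Mv + Mw := by
      calc |p| ≤ |v (x/a)| + |w x| := abs_sub _ _
      _ ≤ Mv + Mw := add_le_add (hvb _ hxa1) (hwb x ⟨hx0.le, hxl⟩)
    have hqb : |q| ≤ Mv + Mw := by
      calc |q| ≤ |v (x/b)| + |w x| := abs_sub _ _
      _ ≤ Mv + Mw := add_le_add (hvb _ hxb1) (hwb x ⟨hx0.le, hxl⟩)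
    have hpq : |p - q| ≤ L * Real.sqrt (ℓ / δ ^ 2) * Real.sqrt (a - b) := by
      have h1 := hvH (x/a) hxa1 (x/b) hxb1
      rw [← Real.sqrt_eq_rpow] at h1
      have heq : p - q = v (x/a) - v (x/b) := by ring
      have hd : |x / a - x / b| ≤ ℓ / δ ^ 2 * (a - b) := by
        have he : x / b - x / a = x * (a - b) / (a * b) := by field_simp
        rw [abs_sub_comm, he, abs_of_nonneg (div_nonneg (mul_nonneg hx0.le hab0) (by positivity)), div_le_iff₀ (by positivity)]
        have h1 : x * (a - b) ≤ ℓ * (a - b) := mul_le_mul_of_nonneg_right hxl hab0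
        have h2 : δ ^ 2 ≤ a * b := by nlinarith [ha.1, hb.1]
        have h4 : ℓ / δ ^ 2 * (a - b) * δ ^ 2 ≤ ℓ / δ ^ 2 * (a - b) * (a * b) :=
          mul_le_mul_of_nonneg_left h2 (mul_nonneg (div_nonneg hℓ0.le (by positivity)) hab0)
        have h3 : ℓ / δ ^ 2 * (a - b) * δ ^ 2 = ℓ * (a - b) := by field_simp
        linarith
      calc |p - q| = |v (x/a) - v (x/b)| := by rw [heq]
      _ ≤ L * Real.sqrt |x/a - x/b| := h1
      _ ≤ L * Real.sqrt (ℓ / δ ^ 2 * (a - b)) :=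
          mul_le_mul_of_nonneg_left (Real.sqrt_le_sqrt hd) hL
      _ = L * (Real.sqrt (ℓ / δ ^ 2) * Real.sqrt (a - b)) := by
          rw [Real.sqrt_mul (div_nonneg hℓ0.le (by positivity))]
      _ = L * Real.sqrt (ℓ / δ ^ 2) * Real.sqrt (a - b) := by ring
    have hdiff : fa x - fb x = (|p| + |q|) * (|p| - |q|) := by
      simp only [hfa, hfb]; ring
    rw [Real.norm_eq_abs, hdiff, abs_mul]
    have h5 : |(|p| - |q|)| ≤ |p - q| := abs_abs_sub_abs_le_abs_sub p q
    have h6 : |(|p| + |q|)| ≤ 2 * (Mv + Mw) := by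
      rw [abs_of_nonneg (by positivity)]; linarith
    calc |(|p| + |q|)| * |(|p| - |q|)| ≤ 2 * (Mv + Mw) * |p - q| := by
          apply mul_le_mul h6 h5 (abs_nonneg _) (by positivity)
    _ ≤ 2 * (Mv + Mw) * (L * Real.sqrt (ℓ / δ ^ 2) * Real.sqrt (a - b)) := by
          apply mul_le_mul_of_nonneg_left hpq (by positivity)
    _ = 2 * (Mv + Mw) * L * Real.sqrt (ℓ / δ ^ 2) * Real.sqrt (a - b) := by ring
  -- pointwise bound 2
  have K2 : ∀ x ∈ Set.uIoc b a, ‖fa x‖ ≤ (Mv + Mw) ^ 2 := by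
    intro x hx
    rw [Set.uIoc_of_le hba] at hx
    have hx0 : 0 < x := lt_trans hδb hx.1
    have hxa : x ≤ a := hx.2
    have hxl : x ≤ ℓ := le_trans hxa ha.2
    have hxa1 : x / a ∈ Icc (0:ℝ) 1 := ⟨div_nonneg hx0.le hδa.le, (div_le_one hδa).2 hxa⟩
    have hpb : |v (x/a) - w x| ≤ Mv + Mw := by
      calc |v (x/a) - w x| ≤ |v (x/a)| + |w x| := abs_sub _ _
      _ ≤ Mv + Mw := add_le_add (hvb _ hxa1) (hwb x ⟨hx0.le, hxl⟩)
    simp only [Real.norm_eq_abs, hfa]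
    rw [abs_of_nonneg (by positivity)]
    exact pow_le_pow_left₀ (abs_nonneg _) hpb 2
  -- combine
  have e1 : ‖∫ x in (0:ℝ)..b, (fa x - fb x)‖
      ≤ 2 * (Mv + Mw) * L * Real.sqrt (ℓ / δ ^ 2) * Real.sqrt (a - b) * |b - 0| :=
    intervalIntegral.norm_integral_le_of_norm_le_const K1
  have e2 : ‖∫ x in b..a, fa x‖ ≤ (Mv + Mw) ^ 2 * |a - b| :=
    intervalIntegral.norm_integral_le_of_norm_le_const K2
  rw [Real.norm_eq_abs] at e1 e2
  have hb_le : |b - 0| ≤ ℓ := by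
    rw [sub_zero, abs_of_nonneg hδb.le]; exact hb.2
  have habs : |a - b| = a - b := abs_of_nonneg hab0
  have hsq : a - b ≤ Real.sqrt ℓ * Real.sqrt (a - b) := by
    have h1 : Real.sqrt (a - b) ≤ Real.sqrt ℓ := Real.sqrt_le_sqrt (by
      have := ha.2; have := hδb; linarith)
    calc a - b = Real.sqrt (a - b) * Real.sqrt (a - b) := (Real.mul_self_sqrt hab0).symm
    _ ≤ Real.sqrt ℓ * Real.sqrt (a - b) := mul_le_mul_of_nonneg_right h1 (Real.sqrt_nonneg _)
  have final : |(∫ x in (0:ℝ)..a, fa x) - ∫ x in (0:ℝ)..b, fb x|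
      ≤ (2 * (Mv + Mw) * L * Real.sqrt (ℓ / δ ^ 2) * ℓ + (Mv + Mw) ^ 2 * Real.sqrt ℓ)
          * Real.sqrt (a - b) := by
    have : (∫ x in (0:ℝ)..a, fa x) - ∫ x in (0:ℝ)..b, fb x
        = (∫ x in (0:ℝ)..b, (fa x - fb x)) + ∫ x in b..a, fa x := by
      rw [← hsub, hsplit]; ring
    rw [this]
    calc |(∫ x in (0:ℝ)..b, (fa x - fb x)) + ∫ x in b..a, fa x|
        ≤ |∫ x in (0:ℝ)..b, (fa x - fb x)| + |∫ x in b..a, fa x| := abs_add_le _ _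
    _ ≤ 2 * (Mv + Mw) * L * Real.sqrt (ℓ / δ ^ 2) * Real.sqrt (a - b) * |b - 0|
        + (Mv + Mw) ^ 2 * |a - b| := add_le_add e1 e2
    _ ≤ 2 * (Mv + Mw) * L * Real.sqrt (ℓ / δ ^ 2) * Real.sqrt (a - b) * ℓ
        + (Mv + Mw) ^ 2 * (Real.sqrt ℓ * Real.sqrt (a - b)) := by
        apply add_le_add
        · exact mul_le_mul_of_nonneg_left hb_le (by positivity)
        · rw [habs]; exact mul_le_mul_of_nonneg_left hsq (by positivity)
    _ = (2 * (Mv + Mw) * L * Real.sqrt (ℓ / δ ^ 2) * ℓ + (Mv + Mw) ^ 2 * Real.sqrt ℓ)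
          * Real.sqrt (a - b) := by ring
  exact final

/-- Quantitative continuity of `s ↦ ∫₀^s |v(x/s) − w x|² dx`: for `v` Hölder-`1/2`
with constant `L` on `[0,1]`, `w` continuous and bounded on `[0,ℓ]`, `s_n, s ∈ [δ,ℓ]`,
there is `C = C(L, ‖v‖_∞, ‖w‖_∞, δ, ℓ)` with
`|t_n − t| ≤ C |s_n − s|^{1/2}`; in particular `t_n → t` when `s_n → s`. -/
theorem stmt11
    (δ ℓ L Mv Mw : ℝ) (hδ : 0 < δ) (hδℓ : δ ≤ ℓ) (hL : 0 ≤ L)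
    (v w : ℝ → ℝ)
    (hvH : ∀ x ∈ Icc (0 : ℝ) 1, ∀ y ∈ Icc (0 : ℝ) 1,
        |v x - v y| ≤ L * |x - y| ^ ((1 : ℝ) / 2))
    (hvb : ∀ x ∈ Icc (0 : ℝ) 1, |v x| ≤ Mv)
    (hw : ContinuousOn w (Icc 0 ℓ)) (hwb : ∀ x ∈ Icc (0 : ℝ) ℓ, |w x| ≤ Mw)
    (sn : ℕ → ℝ) (s : ℝ)
    (hsn : ∀ n, sn n ∈ Icc δ ℓ) (hs : s ∈ Icc δ ℓ)
    (hconv : Tendsto sn atTop (𝓝 s)) :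
    ∃ C > (0 : ℝ),
      (∀ n, |(∫ x in (0 : ℝ)..(sn n), |v (x / sn n) - w x| ^ 2)
              - ∫ x in (0 : ℝ)..s, |v (x / s) - w x| ^ 2|
          ≤ C * |sn n - s| ^ ((1 : ℝ) / 2)) ∧
      Tendsto (fun n => ∫ x in (0 : ℝ)..(sn n), |v (x / sn n) - w x| ^ 2)
        atTop (𝓝 (∫ x in (0 : ℝ)..s, |v (x / s) - w x| ^ 2)) := by
  have hMv : 0 ≤ Mv := le_trans (abs_nonneg _) (hvb 0 ⟨le_refl _, zero_le_one⟩)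
  have hMw : 0 ≤ Mw := le_trans (abs_nonneg _) (hwb 0 ⟨le_refl _, le_trans hδ.le hδℓ⟩)
  have hℓ0 : 0 < ℓ := lt_of_lt_of_le hδ hδℓ
  set C0 := 2 * (Mv + Mw) * L * Real.sqrt (ℓ / δ ^ 2) * ℓ + (Mv + Mw) ^ 2 * Real.sqrt ℓ
    with hC0
  have t1 : 0 ≤ 2 * (Mv + Mw) * L * Real.sqrt (ℓ / δ ^ 2) * ℓ :=
    mul_nonneg (mul_nonneg (mul_nonneg (by linarith) hL) (Real.sqrt_nonneg _)) hℓ0.le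
  have t2 : 0 ≤ (Mv + Mw) ^ 2 * Real.sqrt ℓ := mul_nonneg (sq_nonneg _) (Real.sqrt_nonneg _)
  have hC0nn : 0 ≤ C0 := by rw [hC0]; linarith
  have hbnd : ∀ n, |(∫ x in (0 : ℝ)..(sn n), |v (x / sn n) - w x| ^ 2)
              - ∫ x in (0 : ℝ)..s, |v (x / s) - w x| ^ 2|
          ≤ (C0 + 1) * Real.sqrt |sn n - s| := by
    intro n
    rcases le_total s (sn n) with h | h
    · have hk := key_est δ ℓ L Mv Mw hδ hδℓ hL v w hvH hvb hw hwb (sn n) s (hsn n) hs h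
      rw [abs_of_nonneg (by linarith : (0:ℝ) ≤ sn n - s)]
      calc |(∫ x in (0 : ℝ)..(sn n), |v (x / sn n) - w x| ^ 2)
              - ∫ x in (0 : ℝ)..s, |v (x / s) - w x| ^ 2|
          ≤ C0 * Real.sqrt (sn n - s) := hk
      _ ≤ (C0 + 1) * Real.sqrt (sn n - s) :=
          mul_le_mul_of_nonneg_right (by linarith) (Real.sqrt_nonneg _)
    · have hk := key_est δ ℓ L Mv Mw hδ hδℓ hL v w hvH hvb hw hwb s (sn n) hs (hsn n) h
      rw [abs_sub_comm] at hk
      rw [abs_sub_comm (sn n) s, abs_of_nonneg (by linarith : (0:ℝ) ≤ s - sn n)]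
      calc |(∫ x in (0 : ℝ)..(sn n), |v (x / sn n) - w x| ^ 2)
              - ∫ x in (0 : ℝ)..s, |v (x / s) - w x| ^ 2|
          ≤ C0 * Real.sqrt (s - sn n) := hk
      _ ≤ (C0 + 1) * Real.sqrt (s - sn n) :=
          mul_le_mul_of_nonneg_right (by linarith) (Real.sqrt_nonneg _)
  refine ⟨C0 + 1, by linarith, ?_, ?_⟩
  · intro n
    rw [← Real.sqrt_eq_rpow]
    exact hbnd n
  · have h1 : Tendsto (fun n => sn n - s) atTop (𝓝 0) := by
      simpa using hconv.sub_const s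
    have h2 : Tendsto (fun t : ℝ => (C0 + 1) * Real.sqrt |t|) (𝓝 0)
        (𝓝 ((C0 + 1) * Real.sqrt |0|)) :=
      (continuous_const.mul (Real.continuous_sqrt.comp continuous_abs)).tendsto 0
    have hz : Tendsto (fun n => (C0 + 1) * Real.sqrt |sn n - s|) atTop (𝓝 0) := by
      simpa [Function.comp_def] using h2.comp h1
    have hsq : Tendsto (fun n => (∫ x in (0 : ℝ)..(sn n), |v (x / sn n) - w x| ^ 2)
        - ∫ x in (0 : ℝ)..s, |v (x / s) - w x| ^ 2) atTop (𝓝 0) :=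
      squeeze_zero_norm (fun n => by rw [Real.norm_eq_abs]; exact hbnd n) hz
    exact tendsto_sub_nhds_zero_iff.mp hsq
end
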